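/- Let P be an idempotent positive ordered semiring, (Y, ≤, 0, +) an ordered P-module, and f : (X, ≤) → Y a monotone map from a poset X. Then the induced module homomorphism f^β : O_P X → Y, f^β(θ) = ∑_{x ∈ supp(θ)} θ(x)·f(x), is monotone with respect to the heavier-higher preorder on O_P X. -/

import Mathlib

open Finsupp

variable {X P : Type*}

/-- A subset of a poset is upwards closed. -/
def UpClosed [Preorder X] (U : Set X) : Prop :=
  ∀ ⦃x y : X⦄, x ∈ U → x ≤ y → y ∈ U

open scoped Classical in
/-- The (finite) sum of the values of a finitely supported function on a set `U`. -/
noncomputable def sumOn [AddCommMonoid P] (θ : X →₀ P) (U : Set X) : P :=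
  ∑ x ∈ θ.support.filter (fun x => x ∈ U), θ x

/-- The heavier-higher relation on finitely supported functions from a poset
to an ordered semiring. -/
def HH [Preorder X] [AddCommMonoid P] [PartialOrder P] (θ₁ θ₂ : X →₀ P) : Prop :=
  ∀ U : Set X, UpClosed U → sumOn θ₁ U ≤ sumOn θ₂ U

/-- For `P` idempotent, the induced module homomorphism
`f^β θ = ∑_{x ∈ supp θ} θ x • f x` into an ordered `P`-module is monotone with
respect to the heavier-higher preorder. -/
theorem stmt_8 {Y : Type*} [PartialOrder X] [Semiring P] [PartialOrder P]
    [AddCommMonoid Y] [Module P Y] [PartialOrder Y]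
    (hbot : ∀ r : P, 0 ≤ r)
    (haddmono : ∀ r s t : P, s ≤ t → r + s ≤ r + t)
    (hmulmono : ∀ r s t u : P, r ≤ s → t ≤ u → r * t ≤ s * u)
    (hidem : ∀ r : P, r + r = r)
    (hmod : ∀ (r s : P) (x y z : Y), r ≤ s → x ≤ y → r • x + z ≤ s • y + z)
    (f : X → Y) (hf : Monotone f)
    (θ₁ θ₂ : X →₀ P) (h : HH θ₁ θ₂) :
    (∑ x ∈ θ₁.support, θ₁ x • f x) ≤ ∑ x ∈ θ₂.support, θ₂ x • f x := by
  classical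
  -- basic facts in Y
  have y_add_le_add_right : ∀ a b z : Y, a ≤ b → a + z ≤ b + z := by
    intro a b z hab
    have := hmod 1 1 a b z le_rfl hab
    simpa using this
  have y_add_le_add : ∀ a b c d : Y, a ≤ b → c ≤ d → a + c ≤ b + d := by
    intro a b c d h1 h2
    calc a + c ≤ b + c := y_add_le_add_right _ _ _ h1
      _ = c + b := add_comm _ _
      _ ≤ d + b := y_add_le_add_right _ _ _ h2
      _ = b + d := add_comm _ _
  have y_smul_nonneg : ∀ (r : P) (v : Y), 0 ≤ r • v := by
    intro r v
    have := hmod 0 r v v 0 (hbot r) le_rfl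
    simpa using this
  have y_idem : ∀ v : Y, v + v = v := by
    intro v
    have h1 : ((1 : P) + 1) • v = v + v := by rw [add_smul, one_smul]
    rw [hidem 1, one_smul] at h1
    exact h1.symm
  have y_sum_nonneg : ∀ (s : Finset X) (g : X → Y),
      (∀ i ∈ s, 0 ≤ g i) → 0 ≤ ∑ i ∈ s, g i := by
    intro s
    induction s using Finset.induction_on with
    | empty => intro g _; simp
    | insert _ _ hx ih =>
      intro g hg
      rw [Finset.sum_insert hx]
      have := y_add_le_add 0 _ 0 _ (hg _ (Finset.mem_insert_self _ _))
        (ih g fun i hi => hg i (Finset.mem_insert_of_mem hi))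
      simpa using this
  have y_sum_le_sum : ∀ (s : Finset X) (g₁ g₂ : X → Y),
      (∀ i ∈ s, g₁ i ≤ g₂ i) → ∑ i ∈ s, g₁ i ≤ ∑ i ∈ s, g₂ i := by
    intro s
    induction s using Finset.induction_on with
    | empty => intro g₁ g₂ _; simp
    | insert _ _ hx ih =>
      intro g₁ g₂ hg
      rw [Finset.sum_insert hx, Finset.sum_insert hx]
      exact y_add_le_add _ _ _ _ (hg _ (Finset.mem_insert_self _ _))
        (ih g₁ g₂ fun i hi => hg i (Finset.mem_insert_of_mem hi))
  have y_sum_le_of_subset : ∀ (t s : Finset X) (g : X → Y), t ⊆ s →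
      (∀ i ∈ s, 0 ≤ g i) → ∑ i ∈ t, g i ≤ ∑ i ∈ s, g i := by
    intro t s g hts hg
    have hsplit : ∑ i ∈ s \ t, g i + ∑ i ∈ t, g i = ∑ i ∈ s, g i :=
      Finset.sum_sdiff hts
    rw [← hsplit]
    have h0 : 0 ≤ ∑ i ∈ s \ t, g i :=
      y_sum_nonneg _ _ fun i hi => hg i (Finset.mem_sdiff.mp hi).1
    have := y_add_le_add 0 _ (∑ i ∈ t, g i) (∑ i ∈ t, g i) h0 le_rfl
    simpa using this
  have y_sum_le_of_forall_le : ∀ (s : Finset X) (g : X → Y) (b : Y),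
      (∀ i ∈ s, g i ≤ b) → 0 ≤ b → ∑ i ∈ s, g i ≤ b := by
    intro s
    induction s using Finset.induction_on with
    | empty => intro g b _ hb; simpa using hb
    | insert _ _ hx ih =>
      intro g b hg hb
      rw [Finset.sum_insert hx]
      have h1 := y_add_le_add _ b _ b (hg _ (Finset.mem_insert_self _ _))
        (ih g b (fun i hi => hg i (Finset.mem_insert_of_mem hi)) hb)
      rwa [y_idem b] at h1
  -- a single term is at most the sum, in P
  have p_single_le_sum : ∀ (s : Finset X) (g : X → P) (a : X), a ∈ s →
      g a ≤ ∑ i ∈ s, g i := by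
    intro s g a ha
    rw [← Finset.add_sum_erase s g ha]
    have := haddmono (g a) 0 (∑ i ∈ s.erase a, g i) (hbot _)
    simpa using this
  -- main argument
  have hS₂ : (0 : Y) ≤ ∑ x ∈ θ₂.support, θ₂ x • f x :=
    y_sum_nonneg _ _ fun i _ => y_smul_nonneg _ _
  apply y_sum_le_of_forall_le _ _ _ ?_ hS₂
  intro x hx
  have hU : UpClosed (Set.Ici x) := fun a b ha hab => le_trans ha hab
  have hsum := h (Set.Ici x) hU
  have hx1 : θ₁ x ≤ sumOn θ₁ (Set.Ici x) := by
    unfold sumOn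
    apply p_single_le_sum
    simp only [Finset.mem_filter]
    exact ⟨hx, Set.mem_Ici.mpr le_rfl⟩
  have hc : θ₁ x ≤ sumOn θ₂ (Set.Ici x) := le_trans hx1 hsum
  calc θ₁ x • f x ≤ (sumOn θ₂ (Set.Ici x)) • f x := by
        have := hmod (θ₁ x) (sumOn θ₂ (Set.Ici x)) (f x) (f x) 0 hc le_rfl
        simpa using this
    _ = ∑ y ∈ θ₂.support.filter (fun y => y ∈ Set.Ici x), θ₂ y • f x := by
        unfold sumOn; rw [Finset.sum_smul]; convert rfl
    _ ≤ ∑ y ∈ θ₂.support.filter (fun y => y ∈ Set.Ici x), θ₂ y • f y := by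
        apply y_sum_le_sum
        intro y hy
        have hxy : x ≤ y := (Finset.mem_filter.mp hy).2
        have := hmod (θ₂ y) (θ₂ y) (f x) (f y) 0 le_rfl (hf hxy)
        simpa using this
    _ ≤ ∑ y ∈ θ₂.support, θ₂ y • f y :=
        y_sum_le_of_subset _ _ _ (Finset.filter_subset _ _)
          fun i _ => y_smul_nonneg _ _
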